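/- arXiv:1311.6180 — 3 statements merged into one kernel-verified Lean document; each statement's English description precedes it below -/
import Mathlib

section
/- Let θ_p ≥ 0 for each prime p ≤ n, V uniform on {1,...,n}, Z_p the indicator that p ∣ V, and Y_p independent Bernoulli(1/p) random variables. Then E[exp(∑_{p ≤ n, p prime} θ_p Z_p)] ≤ E[exp(∑_{p ≤ n, p prime} θ_p Y_p)]. -/
open MeasureTheory ProbabilityTheory Finset Real

/-- For nonnegative weights `θ p`, the exponential moment of the weighted sum of
divisibility indicators of a uniform random integer on `{1,…,n}` is dominated by
that of independent Bernoulli(1/p) random variables. -/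
theorem erdos_kac_exp_moment_le (n : ℕ) (hn : 0 < n)
    (θ : ℕ → ℝ) (hθ : ∀ p, 0 ≤ θ p)
    {Ω : Type*} [MeasureSpace Ω] [IsProbabilityMeasure (ℙ : Measure Ω)]
    (Y : ℕ → Ω → ℝ) (hmeas : ∀ p, Measurable (Y p))
    (hind : iIndepFun Y ℙ)
    (h01 : ∀ p ω, Y p ω = 0 ∨ Y p ω = 1)
    (hBer : ∀ p, Nat.Prime p → (ℙ {ω | Y p ω = 1}) = ENNReal.ofReal (1 / p)) :
    (∑ v ∈ Finset.Icc 1 n,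
        Real.exp (∑ p ∈ (Finset.Icc 1 n).filter Nat.Prime,
          θ p * (if p ∣ v then (1 : ℝ) else 0))) / n
      ≤ ∫ ω, Real.exp (∑ p ∈ (Finset.Icc 1 n).filter Nat.Prime, θ p * Y p ω) := by
  set P := (Finset.Icc 1 n).filter Nat.Prime with hP
  set c : ℕ → ℝ := fun p => Real.exp (θ p) - 1 with hc
  have hc0 : ∀ p, 0 ≤ c p := fun p => by
    simp only [hc, sub_nonneg]
    exact Real.one_le_exp (hθ p)
  have hprime : ∀ p ∈ P, Nat.Prime p := fun p hp => (Finset.mem_filter.mp hp).2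
  have key : ∀ z : ℕ → ℝ, (∀ p, z p = 0 ∨ z p = 1) →
      Real.exp (∑ p ∈ P, θ p * z p)
        = ∑ S ∈ P.powerset, (∏ p ∈ S, c p) * ∏ p ∈ S, z p := by
    intro z hz
    rw [Real.exp_sum]
    have h1 : ∀ p ∈ P, Real.exp (θ p * z p) = c p * z p + 1 := by
      intro p _
      rcases hz p with h | h <;> simp [h, hc]
    rw [Finset.prod_congr rfl h1, Finset.prod_add]
    refine Finset.sum_congr rfl fun S _ => ?_
    rw [Finset.prod_const_one, mul_one, Finset.prod_mul_distrib]
  -- LHS computation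
  have lhs_eq : (∑ v ∈ Finset.Icc 1 n,
      Real.exp (∑ p ∈ P, θ p * (if p ∣ v then (1:ℝ) else 0)))
      = ∑ S ∈ P.powerset, (∏ p ∈ S, c p) * ((n / ∏ p ∈ S, p : ℕ) : ℝ) := by
    have : ∀ v, Real.exp (∑ p ∈ P, θ p * (if p ∣ v then (1:ℝ) else 0))
        = ∑ S ∈ P.powerset, (∏ p ∈ S, c p) * ∏ p ∈ S, (if p ∣ v then (1:ℝ) else 0) := by
      intro v
      exact key _ (fun p => by by_cases h : p ∣ v <;> simp [h])
    rw [Finset.sum_congr rfl fun v _ => this v, Finset.sum_comm]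
    refine Finset.sum_congr rfl fun S hS => ?_
    rw [← Finset.mul_sum]
    congr 1
    have hps : ∀ p ∈ S, Nat.Prime p := fun p hp =>
      hprime p (Finset.mem_powerset.mp hS hp)
    have hprod : ∀ v ∈ Finset.Icc 1 n,
        (∏ p ∈ S, (if p ∣ v then (1:ℝ) else 0))
          = if (∏ p ∈ S, p) ∣ v then 1 else 0 := by
      intro v _
      rw [Finset.prod_boole]
      congr 1
      simp only [eq_iff_iff]
      constructor
      · intro h
        exact Finset.prod_primes_dvd v (fun p hp => (hps p hp).prime) h
      · intro h p hp
        exact (Finset.dvd_prod_of_mem _ hp).trans h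
    rw [Finset.sum_congr rfl hprod, Finset.sum_boole]
    have : Finset.Icc 1 n = Finset.Ioc 0 n := by
      ext x; simp [Finset.mem_Icc, Finset.mem_Ioc]; omega
    rw [this]
    norm_cast
    exact Nat.Ioc_filter_dvd_card_eq_div n _
  -- RHS computation
  have meas1 : ∀ p, MeasurableSet {ω | Y p ω = 1} := fun p =>
    (hmeas p) (measurableSet_singleton 1)
  have prodY : ∀ S : Finset ℕ, ∀ ω, (∏ p ∈ S, Y p ω)
      = Set.indicator (⋂ p ∈ S, Y p ⁻¹' {1}) (1 : Ω → ℝ) ω := by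
    intro S ω
    have : ∀ p ∈ S, Y p ω = if Y p ω = 1 then 1 else 0 := by
      intro p _
      rcases h01 p ω with h | h <;> simp [h]
    rw [Finset.prod_congr rfl this, Finset.prod_boole]
    by_cases h : ω ∈ ⋂ p ∈ S, Y p ⁻¹' {1}
    · rw [Set.indicator_of_mem h, Pi.one_apply, if_pos fun i hi =>
        Set.mem_singleton_iff.mp (Set.mem_iInter₂.mp h i hi)]
    · rw [Set.indicator_of_notMem h, if_neg fun hall =>
        h (Set.mem_iInter₂.mpr fun p hp => Set.mem_singleton_iff.mpr (hall p hp))]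
  have measInt : ∀ S : Finset ℕ, MeasurableSet (⋂ p ∈ S, Y p ⁻¹' {1}) :=
    fun S => MeasurableSet.biInter (S.countable_toSet) (fun p _ => meas1 p)
  have intgr : ∀ S ∈ P.powerset,
      Integrable (fun ω => (∏ p ∈ S, c p) * ∏ p ∈ S, Y p ω) ℙ := by
    intro S _
    have : (fun ω => (∏ p ∈ S, c p) * ∏ p ∈ S, Y p ω)
        = fun ω => (∏ p ∈ S, c p) * Set.indicator (⋂ p ∈ S, Y p ⁻¹' {1}) (1 : Ω → ℝ) ω := by
      funext ω; rw [prodY S ω]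
    rw [this]
    exact (((integrable_const (1:ℝ)).indicator (measInt S)).const_mul _)
  have rhs_eq : (∫ ω, Real.exp (∑ p ∈ P, θ p * Y p ω))
      = ∑ S ∈ P.powerset, (∏ p ∈ S, c p) * ∏ p ∈ S, (1 / (p:ℝ)) := by
    have h1 : (∫ ω, Real.exp (∑ p ∈ P, θ p * Y p ω))
        = ∑ S ∈ P.powerset, ∫ ω, (∏ p ∈ S, c p) * ∏ p ∈ S, Y p ω := by
      rw [← integral_finset_sum _ intgr]
      exact integral_congr_ae (Filter.Eventually.of_forall fun ω =>
        key (fun p => Y p ω) (fun p => h01 p ω))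
    rw [h1]
    refine Finset.sum_congr rfl fun S hS => ?_
    have hps : ∀ p ∈ S, Nat.Prime p := fun p hp =>
      hprime p (Finset.mem_powerset.mp hS hp)
    rw [integral_const_mul]
    congr 1
    have : (∫ ω, ∏ p ∈ S, Y p ω)
        = (ℙ (⋂ p ∈ S, Y p ⁻¹' {1})).toReal := by
      rw [integral_congr_ae (Filter.Eventually.of_forall (prodY S)),
        integral_indicator_one (measInt S), measureReal_def]
    rw [this, hind.measure_inter_preimage_eq_mul S
      (sets := fun _ => ({1} : Set ℝ)) (fun i _ => measurableSet_singleton 1)]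
    rw [ENNReal.toReal_prod]
    refine Finset.prod_congr rfl fun p hp => ?_
    have : Y p ⁻¹' {1} = {ω | Y p ω = 1} := by ext ω; simp
    rw [this, hBer p (hps p hp), ENNReal.toReal_ofReal (by positivity)]
  rw [lhs_eq, rhs_eq, Finset.sum_div]
  refine Finset.sum_le_sum fun S hS => ?_
  have hps : ∀ p ∈ S, Nat.Prime p := fun p hp =>
    hprime p (Finset.mem_powerset.mp hS hp)
  have hmpos : 0 < (∏ p ∈ S, p : ℕ) :=
    Finset.prod_pos fun p hp => (hps p hp).pos
  rw [mul_div_assoc]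
  refine mul_le_mul_of_nonneg_left ?_ (Finset.prod_nonneg fun p _ => hc0 p)
  have h1 : ((n / ∏ p ∈ S, p : ℕ) : ℝ) ≤ (n : ℝ) / (∏ p ∈ S, p : ℕ) :=
    Nat.cast_div_le
  have h2 : ∏ p ∈ S, (1 / (p:ℝ)) = 1 / ((∏ p ∈ S, p : ℕ) : ℝ) := by
    rw [Nat.cast_prod]
    simp [Finset.prod_div_distrib]
  rw [h2, div_le_iff₀ (by exact_mod_cast hn)]
  calc ((n / ∏ p ∈ S, p : ℕ) : ℝ) ≤ (n : ℝ) / (∏ p ∈ S, p : ℕ) := h1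
    _ = 1 / ((∏ p ∈ S, p : ℕ) : ℝ) * n := by ring
end

section
/- For λ > 0 and x ≥ 0, the supremum over θ ∈ ℝ of θx − (e^{λ(e^θ − 1)} − 1) equals x·log(W(x e^λ)/λ) + 1 − e^{W(x e^λ) − λ} when x > 0, where W is the Lambert W function satisfying W(z)e^{W(z)} = z for z > 0. -/
open Real

/-- With `ρ` Poisson(λ), the Legendre transform of `θ ↦ e^{λ(e^θ−1)} − 1` at `x > 0`
equals `x·log(W(x e^λ)/λ) + 1 − e^{W(x e^λ) − λ}`, where `W` is the principal
Lambert W function on `(0,∞)`. -/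
theorem legendre_poisson_compound_rate (W : ℝ → ℝ)
    (hW : ∀ z : ℝ, 0 < z → 0 < W z ∧ W z * Real.exp (W z) = z)
    (l x : ℝ) (hl : 0 < l) (hx : 0 < x) :
    IsGreatest
      (Set.range fun θ : ℝ => θ * x - (Real.exp (l * (Real.exp θ - 1)) - 1))
      (x * Real.log (W (x * Real.exp l) / l) + 1
        - Real.exp (W (x * Real.exp l) - l)) := by
  obtain ⟨hwpos, hweq⟩ := hW (x * Real.exp l) (by positivity)
  set w := W (x * Real.exp l) with hwdef
  have hxeq : x = w * Real.exp (w - l) := by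
    rw [Real.exp_sub]
    field_simp
    linarith [hweq]
  have hwl : (0:ℝ) < w / l := div_pos hwpos hl
  have hexpL : Real.exp (Real.log (w / l)) = w / l := Real.exp_log hwl
  constructor
  · refine ⟨Real.log (w / l), ?_⟩
    have h1 : l * (Real.exp (Real.log (w / l)) - 1) = w - l := by
      rw [hexpL]; field_simp
    simp only [h1]; ring
  · rintro y ⟨θ, rfl⟩
    simp only
    set L := Real.log (w / l)
    set E := Real.exp θ with hE
    set K := Real.exp (w - l) with hK
    have hKpos : 0 < K := Real.exp_pos _
    have hEpos : 0 < E := Real.exp_pos _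
    -- e^A ≥ e^B (A - B + 1) with A = l(E-1), B = w - l
    have h1 : K * (l * (E - 1) - (w - l) + 1) ≤ Real.exp (l * (E - 1)) := by
      have := Real.add_one_le_exp (l * (E - 1) - (w - l))
      have h2 : K * (l * (E - 1) - (w - l) + 1) ≤ K * Real.exp (l * (E - 1) - (w - l)) := by
        nlinarith
      calc K * (l * (E - 1) - (w - l) + 1) ≤ K * Real.exp (l * (E - 1) - (w - l)) := h2
        _ = Real.exp (l * (E - 1)) := by rw [hK, ← Real.exp_add]; ring_nf
    -- θ - L + 1 ≤ E * l / w
    have h2 : θ - L + 1 ≤ E * l / w := by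
      have := Real.add_one_le_exp (θ - L)
      have h3 : Real.exp (θ - L) = E * l / w := by
        rw [Real.exp_sub, hexpL, ← hE]
        field_simp
      linarith [h3 ▸ this]
    have h2' : (θ - L + 1) * w ≤ E * l := (le_div_iff₀ hwpos).mp h2
    have hm : K * ((θ - L + 1) * w) ≤ K * (E * l) :=
      mul_le_mul_of_nonneg_left h2' hKpos.le
    rw [hxeq]
    nlinarith [h1, hm]
end

section
/- Let W denote the principal Lambert W function on (0,∞). For x > 0, the supremum over θ ∈ ℝ of θx − (e^{θ²/2} − 1) equals √(W(x²))·x + 1 − x/√(W(x²)), attained at θ = √(W(x²)). -/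
open Real

/-- With `ρ` standard Gaussian, the Legendre transform of `θ ↦ e^{θ²/2} − 1` at
`x > 0` equals `√(W(x²))·x + 1 − x/√(W(x²))`, attained at `θ = √(W(x²))`,
where `W` is the principal Lambert W function on `(0,∞)`. -/
theorem legendre_gaussian_rate (W : ℝ → ℝ)
    (hW : ∀ z : ℝ, 0 < z → 0 < W z ∧ W z * Real.exp (W z) = z)
    (x : ℝ) (hx : 0 < x) :
    IsGreatest
        (Set.range fun θ : ℝ => θ * x - (Real.exp (θ ^ 2 / 2) - 1))
        (Real.sqrt (W (x ^ 2)) * x + 1 - x / Real.sqrt (W (x ^ 2))) ∧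
      Real.sqrt (W (x ^ 2)) * x - (Real.exp (Real.sqrt (W (x ^ 2)) ^ 2 / 2) - 1)
        = Real.sqrt (W (x ^ 2)) * x + 1 - x / Real.sqrt (W (x ^ 2)) := by
  obtain ⟨hwpos, hwe⟩ := hW (x ^ 2) (by positivity)
  set w := W (x ^ 2) with hw
  set s := Real.sqrt w with hsdef
  have hs : 0 < s := Real.sqrt_pos.mpr hwpos
  have hs2 : s ^ 2 = w := Real.sq_sqrt hwpos.le
  have key : s * Real.exp (s ^ 2 / 2) = x := by
    have h1 : (s * Real.exp (s ^ 2 / 2)) ^ 2 = x ^ 2 := by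
      have : (s * Real.exp (s ^ 2 / 2)) ^ 2 = s ^ 2 * Real.exp (s ^ 2) := by
        rw [mul_pow, sq (Real.exp _), ← Real.exp_add]
        ring_nf
      rw [this, hs2, hwe]
    have h2 : 0 < s * Real.exp (s ^ 2 / 2) := by positivity
    nlinarith
  have hexp : Real.exp (s ^ 2 / 2) = x / s := by
    field_simp
    linarith [key]
  have hval : s * x - (Real.exp (s ^ 2 / 2) - 1) = s * x + 1 - x / s := by
    rw [hexp]; ring
  refine ⟨⟨⟨s, hval⟩, ?_⟩, hval⟩
  rintro y ⟨θ, rfl⟩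
  simp only
  have hb : Real.exp (s ^ 2 / 2) * (1 + (θ ^ 2 - s ^ 2) / 2) ≤ Real.exp (θ ^ 2 / 2) := by
    have h1 : 1 + (θ ^ 2 - s ^ 2) / 2 ≤ Real.exp ((θ ^ 2 - s ^ 2) / 2) := by
      linarith [Real.add_one_le_exp ((θ ^ 2 - s ^ 2) / 2)]
    calc Real.exp (s ^ 2 / 2) * (1 + (θ ^ 2 - s ^ 2) / 2)
        ≤ Real.exp (s ^ 2 / 2) * Real.exp ((θ ^ 2 - s ^ 2) / 2) := by
          exact mul_le_mul_of_nonneg_left h1 (Real.exp_pos _).le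
      _ = Real.exp (θ ^ 2 / 2) := by rw [← Real.exp_add]; ring_nf
  have hxs : x / s = Real.exp (s ^ 2 / 2) := hexp.symm
  rw [hxs]
  have he : 0 < Real.exp (s ^ 2 / 2) := Real.exp_pos _
  nlinarith [mul_nonneg he.le (sq_nonneg (θ - s)), key, hb]
end
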